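/- Let n be odd, and suppose M₁, …, M_k are each of the form I - (e_i - e_j)(e_i - e_j)ᵀ/2 with i ≠ j. Let y ∈ ℝⁿ have y_i = 0 for i = 1,…,n₀ and y_i = 2^{k+1} for i = n₀+1,…,2n₀+1, where n = 2n₀+1. Then every coordinate of M_k ⋯ M₁ y is an even integer, while the average (1/n)·∑ y_i = 2^{k+1}(n₀+1)/(2n₀+1) is not an even integer. -/

import Mathlib

open Matrix

lemma avg_step {N : ℕ} (i j : Fin N) (hij : i ≠ j) (v : Fin N → ℝ) (r : ℕ)
    (hv : ∀ a, ∃ m : ℤ, v a = 2 ^ (r + 1) * m) :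
    ∀ a, ∃ m : ℤ, (((1 : Matrix (Fin N) (Fin N) ℝ) - (1/2 : ℝ) • vecMulVec (Pi.single i 1 - Pi.single j 1)
        (Pi.single i 1 - Pi.single j 1)).mulVec v) a = (2:ℝ) ^ r * (m:ℝ) := by
  intro a
  have hform : (((1 : Matrix (Fin N) (Fin N) ℝ) - (1/2 : ℝ) • vecMulVec (Pi.single i 1 - Pi.single j 1)
      (Pi.single i 1 - Pi.single j 1)).mulVec v) a
      = v a - (1/2) * ((Pi.single i 1 - Pi.single j 1 : Fin N → ℝ) a) * (v i - v j) := by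
    simp [Matrix.mulVec, dotProduct, Matrix.sub_apply, Matrix.vecMulVec_apply,
      Matrix.one_apply, Pi.sub_apply, Pi.single_apply, sub_mul, mul_sub, ite_mul, mul_ite,
      Finset.sum_sub_distrib, Finset.sum_ite_eq', hij, mul_comm]
    split_ifs <;> simp_all <;> ring
  obtain ⟨mi, hmi⟩ := hv i
  obtain ⟨mj, hmj⟩ := hv j
  rw [hform]
  rcases eq_or_ne a i with rfl | hai
  · refine ⟨mi + mj, ?_⟩
    rw [hmi, hmj]
    simp [Pi.single_apply, hij, hij.symm]
    push_cast
    ring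
  · rcases eq_or_ne a j with rfl | haj
    · refine ⟨mi + mj, ?_⟩
      rw [hmi, hmj]
      simp [Pi.single_apply, hij, hij.symm, hai]
      push_cast
      ring
    · obtain ⟨ma, hma⟩ := hv a
      refine ⟨2 * ma, ?_⟩
      rw [hma, hmi, hmj]
      simp [Pi.single_apply, hai, haj]
      push_cast
      ring

lemma avg_list {N : ℕ} : ∀ (L : List (Matrix (Fin N) (Fin N) ℝ)),
    (∀ A ∈ L, ∃ i j : Fin N, i ≠ j ∧
      A = 1 - (1/2 : ℝ) • vecMulVec (Pi.single i 1 - Pi.single j 1)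
        (Pi.single i 1 - Pi.single j 1)) →
    ∀ (r : ℕ) (v : Fin N → ℝ), (∀ a, ∃ m : ℤ, v a = 2 ^ (L.length + r) * m) →
    ∀ a, ∃ m : ℤ, (L.prod.mulVec v) a = (2:ℝ) ^ r * (m:ℝ) := by
  intro L
  induction L with
  | nil =>
    intro _ r v hv a
    simpa using hv a
  | cons A L ih =>
    intro hL r v hv a
    obtain ⟨i, j, hij, hA⟩ := hL A List.mem_cons_self
    have hv' := ih (fun B hB => hL B (List.mem_cons_of_mem A hB)) (r + 1) v
      (by intro b; simpa [Nat.add_assoc, Nat.add_comm 1 r] using hv b)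
    rw [List.prod_cons, ← Matrix.mulVec_mulVec, hA]
    exact avg_step i j hij _ r hv' a

theorem averaging_even_coords (n₀ : ℕ) (hn₀ : 1 ≤ n₀) (k : ℕ) (hk : 1 ≤ k)
    (M : Fin k → Matrix (Fin (2 * n₀ + 1)) (Fin (2 * n₀ + 1)) ℝ)
    (hM : ∀ t, ∃ i j : Fin (2 * n₀ + 1), i ≠ j ∧
      M t = 1 - (1/2 : ℝ) • vecMulVec (Pi.single i 1 - Pi.single j 1)
        (Pi.single i 1 - Pi.single j 1))
    (y : Fin (2 * n₀ + 1) → ℝ)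
    (hy : ∀ i, y i = if (i : ℕ) < n₀ then 0 else 2 ^ (k + 1)) :
    (∀ a, ∃ m : ℤ, ((List.ofFn M).prod.mulVec y) a = 2 * m) ∧
      ((∑ i, y i) / (2 * n₀ + 1) = (2 ^ (k + 1) * (n₀ + 1) : ℝ) / (2 * n₀ + 1) ∧
        ¬ ∃ m : ℤ, (∑ i, y i) / (2 * n₀ + 1) = 2 * m) := by
  have hsum : (∑ i, y i) = (2 ^ (k + 1) * (n₀ + 1) : ℝ) := by
    have : (∑ i, y i) = ∑ i ∈ Finset.range (2 * n₀ + 1),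
        (if i < n₀ then (0:ℝ) else 2 ^ (k + 1)) := by
      rw [← Fin.sum_univ_eq_sum_range]
      exact Finset.sum_congr rfl fun i _ => hy i
    rw [this, Finset.range_eq_Ico,
      ← Finset.sum_Ico_consecutive _ (Nat.zero_le n₀) (by omega : n₀ ≤ 2 * n₀ + 1)]
    rw [Finset.sum_congr rfl (fun i hi => if_pos (Finset.mem_Ico.mp hi).2),
      Finset.sum_congr rfl (fun i hi => if_neg (by
        have := (Finset.mem_Ico.mp hi).1; omega))]
    have hcard : 2 * n₀ + 1 - n₀ = n₀ + 1 := by omega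
    simp [Nat.card_Ico, hcard]
    push_cast
    ring
  refine ⟨?_, ?_, ?_⟩
  · have h := avg_list (List.ofFn M) (by
      intro A hA
      obtain ⟨t, rfl⟩ := List.mem_ofFn.mp hA
      exact hM t) 1 y (by
      intro a
      rw [hy a]
      split_ifs
      · exact ⟨0, by simp⟩
      · exact ⟨1, by simp [List.length_ofFn]⟩)
    intro a
    obtain ⟨m, hm⟩ := h a
    exact ⟨m, by rw [hm]; ring⟩
  · rw [hsum]
  · rw [hsum]
    rintro ⟨m, hm⟩
    have hpos : (0:ℝ) < 2 * n₀ + 1 := by positivity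
    rw [div_eq_iff (ne_of_gt hpos)] at hm
    have hZ : (2:ℤ) ^ (k + 1) * (n₀ + 1) = 2 * m * (2 * n₀ + 1) := by
      exact_mod_cast hm
    have hZ' : (2:ℤ) ^ k * (n₀ + 1) = m * (2 * n₀ + 1) := by
      have h2 : (2:ℤ) ^ (k+1) = 2 * 2 ^ k := by ring
      rw [h2] at hZ
      linarith
    have hdvd : (2 * (n₀:ℤ) + 1) ∣ (n₀ + 1) := by
      have hcop : IsCoprime ((2:ℤ) ^ k) (2 * (n₀:ℤ) + 1) := by
        apply IsCoprime.pow_left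
        rw [Int.prime_two.coprime_iff_not_dvd]
        intro h
        omega
      exact hcop.symm.dvd_of_dvd_mul_left ⟨m, by linarith⟩
    have := Int.le_of_dvd (by positivity) hdvd
    omega
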